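/- arXiv:1812.09943 — 8 statements merged into one kernel-verified Lean document; each statement's English description precedes it below -/
import Mathlib

section
/- Let g : ℕ × ℕ → Fin 2 be defined by g(a,b) = 1 iff some value f(x) with a ≤ x < b occurs exactly once among {f(t) : a ≤ t < b}, where f : ℕ → Fin k. If H ⊆ ℕ is infinite and g is constant on pairs (x,y) ∈ H² with x < y, then g is constantly 0 on such pairs, and the minimum of H is an ERT bound for f: every color appearing at or after min H appears at least twice at or after min H. -/
private lemma srt_exists_gt {S : Set ℕ} (hS : S.Infinite) (n : ℕ) : ∃ y ∈ S, n < y := by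
  by_contra h
  push_neg at h
  exact hS ((Set.finite_Iic n).subset fun y hy => h y hy)

private lemma srt_no_one (k : ℕ) (f : ℕ → Fin k) (g : ℕ → ℕ → Fin 2)
    (hg : ∀ a b : ℕ, g a b = 1 ↔
      ∃ x, a ≤ x ∧ x < b ∧ ((Finset.Ico a b).filter fun t => f t = f x).card = 1)
    (H : Set ℕ) (hH : H.Infinite)
    (h1 : ∀ x ∈ H, ∀ y ∈ H, x < y → g x y = 1) : False := by
  classical
  rcases isEmpty_or_nonempty (Fin k) with hk | hk
  · exact hk.false (f 0)
  have key : ∀ n : ℕ, ∃ (S : Finset (Fin k)) (a : ℕ), n ≤ S.card ∧ a ∈ H ∧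
      ∀ v ∈ S, ∀ t, a ≤ t → f t ≠ v := by
    intro n
    induction n with
    | zero => exact ⟨∅, hH.nonempty.choose, by simp, hH.nonempty.choose_spec, by simp⟩
    | succ n ih =>
      obtain ⟨S, a, hcard, haH, hdead⟩ := ih
      set T : Set ℕ := H \ Set.Iic a with hT
      have hTinf : T.Infinite := hH.diff (Set.finite_Iic a)
      have hTw : ∀ y ∈ T, ∃ x, a ≤ x ∧ x < y ∧
          ((Finset.Ico a y).filter fun t => f t = f x).card = 1 := by
        intro y hy
        exact (hg a y).1 (h1 a haH y hy.1 (by simpa using hy.2))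
      set V : ℕ → Fin k := fun y =>
        if h : ∃ x, a ≤ x ∧ x < y ∧
            ((Finset.Ico a y).filter fun t => f t = f x).card = 1
        then f h.choose else Classical.arbitrary (Fin k) with hV
      have hVcount : ∀ y ∈ T, ((Finset.Ico a y).filter fun t => f t = V y).card = 1 := by
        intro y hy
        have h := hTw y hy
        have : V y = f h.choose := by simp only [hV, dif_pos h]
        rw [this]
        exact h.choose_spec.2.2
      -- pigeonhole: some fiber is infinite
      have hfib : ∃ v : Fin k, {y | y ∈ T ∧ V y = v}.Infinite := by
        by_contra h
        push_neg at h
        exact hTinf ((Set.finite_iUnion h).subset fun y hy =>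
          Set.mem_iUnion.2 ⟨V y, hy, rfl⟩)
      obtain ⟨v, hvinf⟩ := hfib
      set Y : Set ℕ := {y | y ∈ T ∧ V y = v} with hY
      have hYcount : ∀ y ∈ Y, ((Finset.Ico a y).filter fun t => f t = v).card = 1 := by
        intro y hy
        have := hVcount y hy.1
        rwa [hy.2] at this
      obtain ⟨y0, hy0⟩ := hvinf.nonempty
      have hc1 := hYcount y0 hy0
      have hpos : 0 < ((Finset.Ico a y0).filter fun t => f t = v).card := by omega
      obtain ⟨x0, hx0⟩ := Finset.card_pos.1 hpos
      simp only [Finset.mem_filter, Finset.mem_Ico] at hx0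
      have hx0a : a ≤ x0 := hx0.1.1
      have hx0v : f x0 = v := hx0.2
      -- uniqueness of x0
      have huniq : ∀ t, a ≤ t → f t = v → t = x0 := by
        intro t hta htv
        by_contra hne
        obtain ⟨y, hyY, hylt⟩ := srt_exists_gt hvinf (max t x0)
        have hmem : ∀ s, a ≤ s → f s = v → s ≤ max t x0 →
            s ∈ (Finset.Ico a y).filter fun u => f u = v := by
          intro s hs1 hs2 hs3
          simp only [Finset.mem_filter, Finset.mem_Ico]
          exact ⟨⟨hs1, lt_of_le_of_lt hs3 hylt⟩, hs2⟩
        have h2 : 1 < ((Finset.Ico a y).filter fun u => f u = v).card :=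
          Finset.one_lt_card.2 ⟨t, hmem t hta htv (le_max_left _ _), x0,
            hmem x0 hx0a hx0v (le_max_right _ _), hne⟩
        have := hYcount y hyY
        omega
      have hvS : v ∉ S := fun hvS => hdead v hvS x0 hx0a hx0v
      obtain ⟨a', ha'H, ha'⟩ := srt_exists_gt hH (max a x0)
      refine ⟨insert v S, a', ?_, ha'H, ?_⟩
      · rw [Finset.card_insert_of_notMem hvS]; omega
      · intro w hw t ht
        rcases Finset.mem_insert.1 hw with rfl | hw
        · intro hfw
          have := huniq t (le_trans (le_trans (le_max_left a x0) (le_of_lt ha')) ht) hfw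
          have : x0 < t := lt_of_le_of_lt (le_max_right a x0) (lt_of_lt_of_le ha' ht)
          omega
        · exact hdead w hw t (le_trans (le_trans (le_max_left a x0) (le_of_lt ha')) ht)
  obtain ⟨S, a, hcard, _, _⟩ := key (k + 1)
  have := Finset.card_le_univ S
  simp only [Finset.card_univ, Fintype.card_fin] at this
  omega

/-- Key lemma in deriving ERT from stable Ramsey's theorem for pairs: if `g`
is the coloring of pairs recording whether some value occurs exactly once in
the interval, and `H` is an infinite set homogeneous for `g`, then `g` is
constantly `0` on pairs from `H`, and `min H` is an ERT bound for `f`. -/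
theorem srt_ert_lemma (k : ℕ) (f : ℕ → Fin k) (g : ℕ → ℕ → Fin 2)
    (hg : ∀ a b : ℕ, g a b = 1 ↔
      ∃ x, a ≤ x ∧ x < b ∧ ((Finset.Ico a b).filter fun t => f t = f x).card = 1)
    (H : Set ℕ) (hH : H.Infinite)
    (hhom : ∃ c : Fin 2, ∀ x ∈ H, ∀ y ∈ H, x < y → g x y = c) :
    (∀ x ∈ H, ∀ y ∈ H, x < y → g x y = 0) ∧
    (∀ c : Fin k, (∃ x ≥ sInf H, f x = c) →
      ∃ x y : ℕ, sInf H ≤ x ∧ sInf H ≤ y ∧ x ≠ y ∧ f x = c ∧ f y = c) := by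
  classical
  obtain ⟨c, hc⟩ := hhom
  have hmem : sInf H ∈ H := Nat.sInf_mem hH.nonempty
  have hc0 : c = 0 := by
    fin_cases c
    · rfl
    · exact absurd (srt_no_one k f g hg H hH (by simpa using hc)) (fun h => h)
  subst hc0
  refine ⟨hc, ?_⟩
  intro c ⟨x, hx, hfx⟩
  by_contra hcon
  push_neg at hcon
  have huniq : ∀ y, sInf H ≤ y → f y = c → y = x := by
    intro y hy hfy
    by_contra hne
    exact hcon x y hx hy (fun h => hne h.symm) hfx hfy
  obtain ⟨y, hyH, hylt⟩ := srt_exists_gt hH x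
  have hmlt : sInf H < y := lt_of_le_of_lt hx hylt
  have hg1 : g (sInf H) y = 1 := by
    rw [hg]
    refine ⟨x, hx, hylt, ?_⟩
    have : (Finset.Ico (sInf H) y).filter (fun t => f t = f x) = {x} := by
      ext t
      simp only [Finset.mem_filter, Finset.mem_Ico, Finset.mem_singleton]
      constructor
      · rintro ⟨⟨h1, _⟩, h3⟩
        exact huniq t h1 (by rw [h3, hfx])
      · rintro rfl
        exact ⟨⟨hx, hylt⟩, rfl⟩
    rw [this, Finset.card_singleton]
  have := hc (sInf H) hmem y hyH hmlt
  rw [hg1] at this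
  exact absurd this (by decide)
end

section
/- For f : ℕ → Fin k, the pair-coloring g(a,b) = 1 iff some value f(x) with a ≤ x < b occurs exactly once in {f(t) : a ≤ t < b}, and g(a,b) = 0 otherwise, is stable: for every a, g(a,b) is eventually constant as b → ∞. -/
/-- The pair-coloring `g(a,b) = 1` iff some value `f x` with `a ≤ x < b`
occurs exactly once in `{f t : a ≤ t < b}` is stable: for every `a`,
`g a b` is eventually constant as `b → ∞`. -/
theorem pair_coloring_stable (k : ℕ) (f : ℕ → Fin k) (g : ℕ → ℕ → Fin 2)
    (hg : ∀ a b : ℕ, (g a b = 1 ↔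
        ∃ x, a ≤ x ∧ x < b ∧ ((Finset.Ico a b).filter fun t => f t = f x).card = 1) ∧
      (g a b ≠ 1 → g a b = 0)) :
    ∀ a : ℕ, ∃ c : Fin 2, ∃ N : ℕ, ∀ b ≥ N, g a b = c := by
  intro a
  set cnt : Fin k → ℕ → ℕ := fun v b => ((Finset.Ico a b).filter fun t => f t = v).card
    with hcnt
  have hmono : ∀ v : Fin k, Monotone (cnt v) := by
    intro v b b' h
    exact Finset.card_le_card (Finset.filter_subset_filter _ (Finset.Ico_subset_Ico le_rfl h))
  have hP : ∀ b, g a b = 1 ↔ ∃ v, cnt v b = 1 := by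
    intro b
    rw [(hg a b).1]
    constructor
    · rintro ⟨x, hax, hxb, hc⟩
      exact ⟨f x, hc⟩
    · rintro ⟨v, hc⟩
      obtain ⟨x, hx⟩ := Finset.card_eq_one.mp hc
      have hxmem : x ∈ (Finset.Ico a b).filter fun t => f t = v := by
        rw [hx]; exact Finset.mem_singleton_self x
      rw [Finset.mem_filter, Finset.mem_Ico] at hxmem
      refine ⟨x, hxmem.1.1, hxmem.1.2, ?_⟩
      rw [hxmem.2]
      exact hc
  have hstab : ∀ v : Fin k, ∃ N : ℕ, ∀ b ≥ N, (cnt v b = 1 ↔ cnt v N = 1) := by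
    intro v
    by_cases h2 : ∃ b, 2 ≤ cnt v b
    · obtain ⟨b0, hb0⟩ := h2
      refine ⟨b0, fun b hb => ?_⟩
      have := hmono v hb
      omega
    · push_neg at h2
      by_cases h1 : ∃ b, cnt v b = 1
      · obtain ⟨b0, hb0⟩ := h1
        refine ⟨b0, fun b hb => ?_⟩
        have := hmono v hb
        have := h2 b
        omega
      · push_neg at h1
        exact ⟨0, fun b _ => by simp [h1 b, h1 0]⟩
  choose Nv hNv using hstab
  refine ⟨g a (Finset.univ.sup Nv), Finset.univ.sup Nv, fun b hb => ?_⟩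
  set N := Finset.univ.sup Nv with hN
  have key : g a b = 1 ↔ g a N = 1 := by
    rw [hP, hP]
    constructor
    · rintro ⟨v, hv⟩
      have hle : Nv v ≤ N := Finset.le_sup (Finset.mem_univ v)
      exact ⟨v, ((hNv v N hle).2 ((hNv v b (hle.trans hb)).1 hv))⟩
    · rintro ⟨v, hv⟩
      have hle : Nv v ≤ N := Finset.le_sup (Finset.mem_univ v)
      exact ⟨v, ((hNv v b (hle.trans hb)).2 ((hNv v N hle).1 hv))⟩
  by_cases h : g a N = 1
  · rw [h, key.mpr h]
  · rw [(hg a N).2 h, (hg a b).2 (fun hb1 => h (key.mp hb1))]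
end

section
/- LPO* is Weihrauch reducible to ERT: given k functions f_0,…,f_{k−1} : ℕ → ℕ, the coloring g : ℕ → Fin (k+1) defined by g(nk+i) = i if f_i(n) = 0 and f_i(m) ≠ 0 for all m < n, and g(nk+i) = k otherwise, has the property that each color i < k appears at most once in the range of g, so any ERT bound b for g bounds the first zero (if any) of each f_i, and hence uniformly decides each LPO instance. -/
/-- LPO* is Weihrauch reducible to ERT: given `k` LPO instances
`fs 0, …, fs (k-1)`, the coloring `g : ℕ → Fin (k+1)` with
`g (n*k+i) = i` iff `fs i n = 0` first happens at `n` (and `= k` otherwise)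
has each color `i < k` appearing at most once, any ERT bound `b` for `g`
bounds the position coding the first zero of each `fs i`, and hence decides
each LPO instance. -/
theorem lpo_star_red_ert (k : ℕ) (hk : 0 < k) (fs : Fin k → ℕ → ℕ)
    (g : ℕ → Fin (k + 1))
    (hg : ∀ (n : ℕ) (i : Fin k),
      g (n * k + i.val) =
        if fs i n = 0 ∧ ∀ m < n, fs i m ≠ 0 then i.castSucc else Fin.last k) :
    (∀ i : Fin k, ∀ x y : ℕ, g x = i.castSucc → g y = i.castSucc → x = y) ∧
    (∀ b : ℕ, (∀ x ≥ b, ∃ y ≥ b, y ≠ x ∧ g x = g y) →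
      (∀ (i : Fin k) (n : ℕ), fs i n = 0 → (∀ m < n, fs i m ≠ 0) →
        n * k + i.val < b) ∧
      (∀ i : Fin k, (∃ n, fs i n = 0) ↔ ∃ j < b, g j = i.castSucc)) := by
  -- key decoding lemma
  have key : ∀ (i : Fin k) (x : ℕ), g x = i.castSucc →
      fs i (x / k) = 0 ∧ (∀ m < x / k, fs i m ≠ 0) ∧ x = (x / k) * k + i.val := by
    intro i x hx
    have hr : x % k < k := Nat.mod_lt _ hk
    have hdecomp : x = (x / k) * k + (⟨x % k, hr⟩ : Fin k).val := by
      simpa [Nat.mul_comm] using (Nat.div_add_mod x k).symm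
    have := hg (x / k) ⟨x % k, hr⟩
    rw [← hdecomp, hx] at this
    by_cases hcond : fs ⟨x % k, hr⟩ (x / k) = 0 ∧ ∀ m < x / k, fs ⟨x % k, hr⟩ m ≠ 0
    · rw [if_pos hcond] at this
      have hieq : (⟨x % k, hr⟩ : Fin k) = i := by
        have := congrArg Fin.val this
        simp [Fin.castSucc] at this
        exact Fin.ext this.symm
      rw [hieq] at hcond hdecomp
      exact ⟨hcond.1, hcond.2, hdecomp⟩
    · rw [if_neg hcond] at this
      exfalso
      have := congrArg Fin.val this
      simp [Fin.last] at this
      omega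
  have uniq : ∀ i : Fin k, ∀ x y : ℕ, g x = i.castSucc → g y = i.castSucc → x = y := by
    intro i x y hx hy
    obtain ⟨hx0, hxmin, hxe⟩ := key i x hx
    obtain ⟨hy0, hymin, hye⟩ := key i y hy
    have : x / k = y / k := by
      by_contra h
      rcases Nat.lt_or_ge (x / k) (y / k) with h' | h'
      · exact hymin _ h' hx0
      · exact hxmin _ (lt_of_le_of_ne h' (Ne.symm h)) hy0
    rw [hxe, hye, this]
  refine ⟨uniq, fun b hb => ?_⟩
  have bound : ∀ (i : Fin k) (n : ℕ), fs i n = 0 → (∀ m < n, fs i m ≠ 0) →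
      n * k + i.val < b := by
    intro i n h0 hmin
    by_contra h
    push_neg at h
    have hgx : g (n * k + i.val) = i.castSucc := by
      rw [hg n i, if_pos ⟨h0, hmin⟩]
    obtain ⟨y, hy, hyne, hgeq⟩ := hb _ h
    exact hyne (uniq i y _ (hgeq ▸ hgx) hgx)
  refine ⟨bound, fun i => ⟨fun ⟨n, hn⟩ => ?_, fun ⟨j, _, hj⟩ => ⟨j / k, (key i j hj).1⟩⟩⟩
  have hex : ∃ n, fs i n = 0 := ⟨n, hn⟩
  classical
  let m := Nat.find hex
  have hm0 : fs i m = 0 := Nat.find_spec hex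
  have hmmin : ∀ j < m, fs i j ≠ 0 := fun j hj => Nat.find_min hex hj
  refine ⟨m * k + i.val, bound i m hm0 hmmin, ?_⟩
  rw [hg m i, if_pos ⟨hm0, hmmin⟩]
end

section
/- ECT is Weihrauch reducible to TC_ℕ*: given f : ℕ → Fin k, for each color i < k one can uniformly compute an enumeration of the complement of A_i = {n | ∀ m ≥ n, f(m) ≠ i}, and if b_i is any number with b_i ∈ A_i whenever A_i ≠ ∅, then b = 1 + max_i b_i satisfies: every color appearing in f at or after b appears infinitely often. -/
/-- ECT is Weihrauch reducible to TC_ℕ*: for each color `i < k` one can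
uniformly (continuously) compute an enumeration of the complement of
`A i = {n | ∀ m ≥ n, f m ≠ i}` (here `e f i s = n + 1` means that `n` is
enumerated), and if `bs i ∈ A i` whenever `A i ≠ ∅`, then
`b = 1 + max_i (bs i)` is an ECT bound: every color appearing at or after `b`
appears infinitely often. -/
theorem ect_red_tc_star (k : ℕ) :
    (∃ e : (ℕ → Fin k) → Fin k → ℕ → ℕ,
      Continuous e ∧
      ∀ (f : ℕ → Fin k) (i : Fin k) (n : ℕ),
        (∃ s : ℕ, e f i s = n + 1) ↔ n ∉ {n' | ∀ m ≥ n', f m ≠ i}) ∧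
    ∀ (f : ℕ → Fin k) (bs : Fin k → ℕ),
      (∀ i : Fin k, {n' | ∀ m ≥ n', f m ≠ i}.Nonempty →
        bs i ∈ {n' | ∀ m ≥ n', f m ≠ i}) →
      ∀ c : Fin k, (∃ x ≥ 1 + Finset.univ.sup bs, f x = c) →
        {x | f x = c}.Infinite := by
  constructor
  · refine ⟨fun f i s =>
      if s.unpair.1 ≤ s.unpair.2 ∧ f s.unpair.2 = i then s.unpair.1 + 1 else 0,
      ?_, ?_⟩
    · apply continuous_pi; intro i
      apply continuous_pi; intro s
      exact (continuous_of_discreteTopology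
        (f := fun v : Fin k => if s.unpair.1 ≤ s.unpair.2 ∧ v = i
          then s.unpair.1 + 1 else 0)).comp (continuous_apply s.unpair.2)
    · intro f i n
      simp only [Set.mem_setOf_eq, not_forall]
      constructor
      · rintro ⟨s, hs⟩
        by_cases h : s.unpair.1 ≤ s.unpair.2 ∧ f s.unpair.2 = i
        · rw [if_pos h] at hs
          exact ⟨s.unpair.2, by omega, fun hne => hne h.2⟩
        · rw [if_neg h] at hs; omega
      · rintro ⟨m, hm, hfm⟩
        refine ⟨Nat.pair n m, ?_⟩
        rw [if_pos (by simp [Nat.unpair_pair]; exact ⟨hm, not_not.mp hfm⟩)]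
        simp [Nat.unpair_pair]
  · rintro f bs hbs c ⟨x, hx, hfx⟩
    by_contra hfin
    rw [Set.not_infinite] at hfin
    obtain ⟨N, hN⟩ := hfin.bddAbove
    have hA : {n' | ∀ m ≥ n', f m ≠ c}.Nonempty := by
      refine ⟨N + 1, fun m hm hne => ?_⟩
      have := hN hne
      omega
    have hb := hbs c hA
    have : bs c ≤ Finset.univ.sup bs := Finset.le_sup (Finset.mem_univ c)
    exact hb x (by omega) hfx
end

section
/- TC_ℕ* is Weihrauch reducible to ECT: given enumerations e_1,…,e_{k−1} of complements of sets A_1,…,A_{k−1} ⊆ ℕ, define c : ℕ → Fin k by c(⟨s,i⟩) = i (for i ≠ 0) iff e_i(s) = min{n | ∀ t < s, e_i(t) ≠ n}, and c = 0 otherwise; then from any ECT bound b for c one can compute, for each i, a number which is in A_i whenever A_i is nonempty. -/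
/-- TC_ℕ* is Weihrauch reducible to ECT: given enumerations `e i` of the
complements of sets `A i` (for `i ≠ 0`; here `e i s = n + 1` means that `n` is
enumerated), define `c (pair s i) = i` (for `i ≠ 0`) iff `e i` enumerates at
stage `s` the least number not yet enumerated before stage `s`, and `c = 0`
otherwise.  Then from any ECT bound `b` for `c` one can compute, for each `i`,
a number which is in `A i` whenever `A i` is nonempty. -/
theorem tc_star_red_ect (k : ℕ) (A : Fin (k + 1) → Set ℕ) (e : Fin (k + 1) → ℕ → ℕ)
    (he : ∀ i : Fin (k + 1), i ≠ 0 → ∀ n : ℕ, n ∉ A i ↔ ∃ s : ℕ, e i s = n + 1)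
    (pair : ℕ → Fin (k + 1) → ℕ)
    (hpair : Function.Bijective fun p : ℕ × Fin (k + 1) => pair p.1 p.2)
    (hmono : ∀ (s s' : ℕ) (i : Fin (k + 1)), s ≤ s' → pair s i ≤ pair s' i)
    (c : ℕ → Fin (k + 1))
    (hc : ∀ (s : ℕ) (i : Fin (k + 1)),
      c (pair s i) =
        if i ≠ 0 ∧ e i s = sInf {n | ∀ t < s, e i t ≠ n + 1} + 1 then i else 0) :
    ∀ b : ℕ, (∀ x ≥ b, ∃ y > x, c x = c y) →
      ∀ i : Fin (k + 1), i ≠ 0 → ∀ s : ℕ, b ≤ pair s i →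
        (A i).Nonempty → sInf {n | ∀ t < s, e i t ≠ n + 1} ∈ A i := by
  intro b hb i hi s hbs ⟨a, ha⟩
  set M : ℕ → ℕ := fun t => sInf {n | ∀ t' < t, e i t' ≠ n + 1} with hM
  -- `a` is never enumerated
  have hane : ∀ t, e i t ≠ a + 1 := by
    intro t ht
    exact ((he i hi a).mpr ⟨t, ht⟩) ha
  have hamem : ∀ t, a ∈ {n | ∀ t' < t, e i t' ≠ n + 1} := fun t t' _ => hane t'
  have hMa : ∀ t, M t ≤ a := fun t => Nat.sInf_le (hamem t)
  have hMspec : ∀ t, ∀ t' < t, e i t' ≠ M t + 1 := by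
    intro t
    exact Nat.sInf_mem (⟨a, hamem t⟩ : {n | ∀ t' < t, e i t' ≠ n + 1}.Nonempty)
  have hMmono : ∀ t t', t ≤ t' → M t ≤ M t' := by
    intro t t' htt'
    exact Nat.sInf_le fun u hu => hMspec t' u (lt_of_lt_of_le hu htt')
  -- characterization of color i
  have hcolor : ∀ t, c (pair t i) = i ↔ e i t = M t + 1 := by
    intro t
    rw [hc]
    constructor
    · intro h
      split_ifs at h with h'
      · exact h'.2
      · exact absurd h.symm hi
    · intro h
      rw [if_pos ⟨hi, h⟩]
  -- if the min is enumerated, M strictly increases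
  have hstep : ∀ t, e i t = M t + 1 → M t < M (t + 1) := by
    intro t het
    rcases lt_or_eq_of_le (hMmono t (t + 1) (Nat.le_succ t)) with h | h
    · exact h
    · exact absurd het (h ▸ hMspec (t + 1) t (Nat.lt_succ_self t))
  -- suppose for contradiction M s ∉ A i
  by_contra hcon
  obtain ⟨s', hs'⟩ := (he i hi (M s)).mp hcon
  -- s' ≥ s
  have hss' : s ≤ s' := by
    by_contra hlt
    exact hMspec s s' (Nat.lt_of_not_le hlt) hs'
  -- find least t ≥ s with e i t = M s + 1
  have hexP : ∃ t, s ≤ t ∧ e i t = M s + 1 := ⟨s', hss', hs'⟩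
  classical
  let t₀ := Nat.find hexP
  obtain ⟨ht₀s, ht₀e⟩ := Nat.find_spec hexP
  have hMt₀ : M t₀ = M s := by
    have h1 : M s ≤ M t₀ := hMmono s t₀ ht₀s
    have h2 : M t₀ ≤ M s := by
      apply Nat.sInf_le
      intro t' ht' het'
      rcases lt_or_ge t' s with h | h
      · exact hMspec s t' h het'
      · exact Nat.find_min hexP ht' ⟨h, het'⟩
    omega
  have hct₀ : c (pair t₀ i) = i := (hcolor t₀).mpr (hMt₀ ▸ ht₀e)
  -- iterate: for each N there is t with b ≤ pair t i, color i, and M t ≥ N + M s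
  have key : ∀ N, ∃ t, b ≤ pair t i ∧ c (pair t i) = i ∧ N + M s ≤ M t := by
    intro N
    induction N with
    | zero => exact ⟨t₀, le_trans hbs (hmono s t₀ i ht₀s), hct₀, by omega⟩
    | succ N ih =>
      obtain ⟨t, hbt, hct, hMt⟩ := ih
      obtain ⟨y, hy, hcy⟩ := hb (pair t i) hbt
      obtain ⟨⟨t', i'⟩, hyeq⟩ := hpair.2 y
      simp only at hyeq
      rw [← hyeq] at hy hcy
      have hi' : i' = i := by
        rw [hct, hc] at hcy
        split_ifs at hcy with h
        · exact hcy.symm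
        · exact absurd hcy hi
      rw [hi'] at hy hcy
      have htt' : t < t' := by
        by_contra h
        exact absurd (hmono t' t i (Nat.le_of_not_lt h)) (Nat.not_le_of_lt hy)
      have hct' : c (pair t' i) = i := by rw [← hcy, hct]
      have het : e i t = M t + 1 := (hcolor t).mp hct
      have : M t < M (t + 1) := hstep t het
      have : M (t + 1) ≤ M t' := hMmono (t + 1) t' htt'
      exact ⟨t', le_trans hbt (le_of_lt hy), hct', by omega⟩
  obtain ⟨t, _, _, hMt⟩ := key (a + 1)
  have := hMa t
  omega
end

section
/- isInfinite is not Weihrauch reducible to TC_ℕ*: there are no computable functionals Φ, Ψ such that for every p : ℕ → 2, Φ(p) is a finite tuple of TC_ℕ instances and Ψ applied to any tuple of solutions together with p correctly decides whether p has infinitely many ones. -/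
lemma loc_const {X : Type*} [TopologicalSpace X] [DiscreteTopology X]
    (f : (ℕ → Bool) → X) (hf : Continuous f) (p : ℕ → Bool) :
    ∃ m : ℕ, ∀ q : ℕ → Bool, (∀ x < m, q x = p x) → f q = f p := by
  have hU : IsOpen (f ⁻¹' {f p}) := (isOpen_discrete _).preimage hf
  rw [isOpen_pi_iff] at hU
  obtain ⟨I, u, hIu, hsub⟩ := hU p (by simp)
  refine ⟨I.sup id + 1, fun q hq => ?_⟩
  have hmem : q ∈ (I : Set ℕ).pi u := by
    intro i hi
    have hiI : i ∈ I := hi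
    rw [hq i (Nat.lt_succ_of_le (Finset.le_sup (f := id) hiI))]
    exact (hIu i hiI).2
  simpa using hsub hmem

lemma loc_const2 {X : Type*} [TopologicalSpace X] [DiscreteTopology X]
    (f : (ℕ → Bool) × (ℕ → ℕ) → X) (hf : Continuous f) (p : ℕ → Bool) (a : ℕ → ℕ) :
    ∃ m : ℕ, ∀ (q : ℕ → Bool) (b : ℕ → ℕ),
      (∀ x < m, q x = p x) → (∀ x < m, b x = a x) → f (q, b) = f (p, a) := by
  have hU : IsOpen (f ⁻¹' {f (p, a)}) := (isOpen_discrete _).preimage hf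
  rw [isOpen_prod_iff] at hU
  obtain ⟨u, v, hu, hv, hpu, hav, hsub⟩ := hU p a (by simp)
  rw [isOpen_pi_iff] at hu hv
  obtain ⟨I, w, hIw, hsubI⟩ := hu p hpu
  obtain ⟨J, z, hJz, hsubJ⟩ := hv a hav
  refine ⟨max (I.sup id + 1) (J.sup id + 1), fun q b hq hb => ?_⟩
  have hqu : q ∈ u := by
    apply hsubI
    intro i hi
    have hiI : i ∈ I := hi
    rw [hq i (lt_of_lt_of_le (Nat.lt_succ_of_le (Finset.le_sup (f := id) hiI)) (le_max_left _ _))]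
    exact (hIw i hiI).2
  have hbv : b ∈ v := by
    apply hsubJ
    intro i hi
    have hiJ : i ∈ J := hi
    rw [hb i (lt_of_lt_of_le (Nat.lt_succ_of_le (Finset.le_sup (f := id) hiJ)) (le_max_right _ _))]
    exact (hJz i hiJ).2
  have : (q, b) ∈ u ×ˢ v := ⟨hqu, hbv⟩
  simpa using hsub this

lemma build_chain {α : Type*} (init : α) (R : ℕ → α → α → Prop)
    (h : ∀ j a, ∃ b, R j a b) :
    ∃ f : ℕ → α, f 0 = init ∧ ∀ j, R j (f j) (f (j + 1)) := by
  choose g hg using h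
  exact ⟨fun n => Nat.rec init g n, rfl, fun j => hg j _⟩

section helpers

/-- `p` extends the finite condition given by length `l` and values `g`. -/
def ExtP (l : ℕ) (g p : ℕ → Bool) : Prop := ∀ x < l, p x = g x

/-- `n` is never enumerated by instance `i` for any `p` extending `(l, g)`. -/
def SafeP (E : (ℕ → Bool) → ℕ → ℕ → ℕ) (l : ℕ) (g : ℕ → Bool) (i n : ℕ) : Prop :=
  ∀ p, ExtP l g p → ¬ ∃ s, E p i s = n + 1

end helpers

/-- `isInfinite` is not Weihrauch reducible to TC_ℕ*: there are no effective
(here: continuous) functionals `Φ`, `Ψ` such that `Φ p` is a finite tuple of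
TC_ℕ instances (a number of instances together with enumerations, where
`e s = n + 1` means that `n` is enumerated into the complement) and `Ψ`,
applied to `p` together with any tuple of TC_ℕ solutions, correctly decides
whether `p` has infinitely many ones. -/
theorem isInfinite_not_red_tc_star :
    ¬ ∃ (Φ : (ℕ → Bool) → ℕ × (ℕ → ℕ → ℕ))
        (Ψ : (ℕ → Bool) × (ℕ → ℕ) → Bool),
      Continuous Φ ∧ Continuous Ψ ∧
      ∀ (p : ℕ → Bool) (a : ℕ → ℕ),
        (∀ i < (Φ p).1,
          {n | ¬ ∃ s : ℕ, (Φ p).2 i s = n + 1}.Nonempty →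
            a i ∈ {n | ¬ ∃ s : ℕ, (Φ p).2 i s = n + 1}) →
        (Ψ (p, a) = true ↔ {n | p n = true}.Infinite) := by
  rintro ⟨Φ, Ψ, hΦc, hΨc, hcorr⟩
  classical
  set E : (ℕ → Bool) → ℕ → ℕ → ℕ := fun p => (Φ p).2 with hEdef
  obtain ⟨m₀, hm₀⟩ := loc_const (fun p => (Φ p).1) hΦc.fst (fun _ => false)
  set k : ℕ := (Φ (fun _ => false)).1 with hkdef
  have hEmod : ∀ (i s : ℕ) (p : ℕ → Bool), ∃ m, ∀ q, (∀ x < m, q x = p x) → E q i s = E p i s :=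
    fun i s p => loc_const (fun p => E p i s)
      ((continuous_apply s).comp ((continuous_apply i).comp hΦc.snd)) p
  -- the "Good" predicate and a maximal good tuple
  set Good : ℕ → (ℕ → Bool) → Finset ℕ → (ℕ → ℕ) → Prop :=
    fun l g S ν => m₀ ≤ l ∧ (∀ x < m₀, g x = false) ∧ S ⊆ Finset.range k ∧
      ∀ i ∈ S, SafeP E l g i (ν i) with hGoodDef
  set P : ℕ → Prop := fun c => ∃ l g S ν, Good l g S ν ∧ S.card = c with hPdef
  have hP0 : P 0 := ⟨m₀, fun _ => false, ∅, fun _ => 0,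
    ⟨le_refl _, fun _ _ => rfl, by simp, by simp⟩, by simp⟩
  have hPle : ∀ c, P c → c ≤ k := by
    rintro c ⟨l, g, S, ν, hg, rfl⟩
    simpa using Finset.card_le_card hg.2.2.1
  have hPc₀ : P (Nat.findGreatest P k) := Nat.findGreatest_spec (Nat.zero_le k) hP0
  set c₀ := Nat.findGreatest P k with hc₀def
  obtain ⟨l₀, g₀, S, ν, ⟨hl₀m₀, hg₀false, hSsub, hSafeS⟩, hcard⟩ := hPc₀
  -- density of enumeration for instances not in S
  have hdense : ∀ i, i < k → i ∉ S → ∀ l g, l₀ ≤ l → (∀ x < l₀, g x = g₀ x) →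
      ∀ n, ∃ p, ExtP l g p ∧ ∃ s, E p i s = n + 1 := by
    intro i hik hiS l g hll hgg n
    by_contra hno
    push_neg at hno
    have hsafe : SafeP E l g i n := fun p hp hex => by
      obtain ⟨s, hs⟩ := hex
      exact hno p hp s hs
    have hgood' : Good l g (insert i S) (Function.update ν i n) := by
      refine ⟨le_trans hl₀m₀ hll,
        fun x hx => by rw [hgg x (lt_of_lt_of_le hx hl₀m₀), hg₀false x hx], ?_, ?_⟩
      · exact Finset.insert_subset (Finset.mem_range.2 hik) hSsub
      · intro j hj
        rcases Finset.mem_insert.1 hj with rfl | hjS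
        · rw [Function.update_self]; exact hsafe
        · have hne : j ≠ i := fun h => hiS (h ▸ hjS)
          rw [Function.update_of_ne hne]
          intro p hp
          exact hSafeS j hjS p (fun x hx => by rw [hp x (lt_of_lt_of_le hx hll), hgg x hx])
    have hPc1 : P (c₀ + 1) := ⟨l, g, insert i S, Function.update ν i n, hgood',
      by rw [Finset.card_insert_of_notMem hiS, hcard]⟩
    have := Nat.le_findGreatest (hPle _ hPc1) hPc1
    omega
  -- the finite point q
  set q : ℕ → Bool := fun x => if x < l₀ then g₀ x else false with hqdef
  have hEq : ExtP l₀ g₀ q := fun x hx => by simp [hqdef, hx]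
  have hqk : (Φ q).1 = k := hm₀ q (fun x hx => by
    rw [hEq x (lt_of_lt_of_le hx hl₀m₀), hg₀false x hx])
  have hqfin : ¬ ({n | q n = true} : Set ℕ).Infinite := by
    rw [Set.not_infinite]
    apply (Set.finite_Iio l₀).subset
    intro n hn
    simp only [Set.mem_setOf_eq, hqdef] at hn
    by_contra hlt
    simp only [Set.mem_Iio] at hlt
    rw [if_neg hlt] at hn
    exact Bool.false_ne_true hn
  -- the answer tuple
  set a : ℕ → ℕ := fun i => if i ∈ S then ν i else
    (if h : ({n | ¬ ∃ s : ℕ, (Φ q).2 i s = n + 1} : Set ℕ).Nonempty then h.some else 0)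
    with hadef
  have hvalidq : ∀ i < (Φ q).1,
      ({n | ¬ ∃ s : ℕ, (Φ q).2 i s = n + 1} : Set ℕ).Nonempty →
        a i ∈ {n | ¬ ∃ s : ℕ, (Φ q).2 i s = n + 1} := by
    intro i _ hne
    by_cases hiS : i ∈ S
    · have hs := hSafeS i hiS q hEq
      simp only [hadef, if_pos hiS]
      exact hs
    · simp only [hadef, if_neg hiS, dif_pos hne]
      exact hne.some_mem
  have hΨq : Ψ (q, a) = false := by
    have h := hcorr q a hvalidq
    cases hb : Ψ (q, a) with
    | false => rfl
    | true => exact absurd (h.1 hb) hqfin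
  obtain ⟨m₁, hm₁⟩ := loc_const2 Ψ hΨc q a
  -- build the generic infinite extension G
  set L := max m₁ l₀ with hLdef
  set Inv : ℕ × (ℕ → Bool) → Prop :=
    fun st => l₀ ≤ st.1 ∧ ∀ x < l₀, st.2 x = g₀ x with hInvDef
  set R : ℕ → ℕ × (ℕ → Bool) → ℕ × (ℕ → Bool) → Prop := fun j st st' =>
    Inv st → (Inv st' ∧ st.1 < st'.1 ∧ (∀ x < st.1, st'.2 x = st.2 x) ∧
      st'.2 (st'.1 - 1) = true ∧
      ∀ i n, j = Nat.pair i n → i < k → i ∉ S →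
        ∃ s, ∀ p, ExtP st'.1 st'.2 p → E p i s = n + 1) with hRdef
  have hex : ∀ j st, ∃ st', R j st st' := by
    intro j st
    by_cases hInv : Inv st
    · by_cases happ : j.unpair.1 < k ∧ j.unpair.1 ∉ S
      · obtain ⟨p, hp, s, hs⟩ :=
          hdense j.unpair.1 happ.1 happ.2 st.1 st.2 hInv.1 hInv.2 j.unpair.2
        obtain ⟨me, hme⟩ := hEmod j.unpair.1 s p
        have hst1 : st.1 ≤ max st.1 me := le_max_left _ _
        have hme1 : me ≤ max st.1 me := le_max_right _ _
        have hl₀st : l₀ ≤ st.1 := hInv.1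
        refine ⟨(max st.1 me + 2, fun x => if x < max st.1 me + 1 then p x else true),
          fun _ => ⟨⟨?_, ?_⟩, ?_, ?_, ?_, ?_⟩⟩
        · show l₀ ≤ max st.1 me + 2
          omega
        · show ∀ x < l₀, (if x < max st.1 me + 1 then p x else true) = g₀ x
          intro x hx
          have hxst : x < st.1 := lt_of_lt_of_le hx hInv.1
          rw [if_pos (by omega), hp x hxst]
          exact hInv.2 x hx
        · show st.1 < max st.1 me + 2
          omega
        · show ∀ x < st.1, (if x < max st.1 me + 1 then p x else true) = st.2 x
          intro x hx
          rw [if_pos (by omega)]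
          exact hp x hx
        · show (if (max st.1 me + 2 - 1) < max st.1 me + 1 then p (max st.1 me + 2 - 1)
              else true) = true
          rw [if_neg (by omega)]
        · intro i n hj hik hiS
          have hi : i = j.unpair.1 := by rw [hj, Nat.unpair_pair]
          have hn : n = j.unpair.2 := by rw [hj, Nat.unpair_pair]
          subst hi; subst hn
          refine ⟨s, fun p' hp' => ?_⟩
          have hagr : ∀ x < me, p' x = p x := by
            intro x hx
            have h1 : p' x = (if x < max st.1 me + 1 then p x else true) :=
              hp' x (by show x < max st.1 me + 2; omega)
            rw [h1, if_pos (by omega)]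
          rw [hme p' hagr, hs]
      · have hl₀st : l₀ ≤ st.1 := hInv.1
        refine ⟨(st.1 + 2, fun x => if x < st.1 + 1 then st.2 x else true),
          fun _ => ⟨⟨?_, ?_⟩, ?_, ?_, ?_, ?_⟩⟩
        · show l₀ ≤ st.1 + 2
          omega
        · show ∀ x < l₀, (if x < st.1 + 1 then st.2 x else true) = g₀ x
          intro x hx
          rw [if_pos (by omega)]
          exact hInv.2 x hx
        · show st.1 < st.1 + 2
          omega
        · show ∀ x < st.1, (if x < st.1 + 1 then st.2 x else true) = st.2 x
          intro x hx
          rw [if_pos (by omega)]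
        · show (if (st.1 + 2 - 1) < st.1 + 1 then st.2 (st.1 + 2 - 1) else true) = true
          rw [if_neg (by omega)]
        · intro i n hj hik hiS
          rw [hj] at happ
          simp only [Nat.unpair_pair] at happ
          exact absurd ⟨hik, hiS⟩ happ
    · exact ⟨st, fun h => absurd h hInv⟩
  obtain ⟨f, hf0, hfR⟩ := build_chain (L, q) R hex
  have hInv0 : Inv (f 0) := by
    rw [hf0]
    exact ⟨le_max_right _ _, fun x hx => hEq x hx⟩
  have hInvAll : ∀ j, Inv (f j) := by
    intro j
    induction j with
    | zero => exact hInv0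
    | succ j ih => exact ((hfR j) ih).1
  have hstep : ∀ j, (f j).1 < (f (j + 1)).1 ∧ (∀ x < (f j).1, (f (j + 1)).2 x = (f j).2 x) ∧
      (f (j + 1)).2 ((f (j + 1)).1 - 1) = true ∧
      ∀ i n, j = Nat.pair i n → i < k → i ∉ S →
        ∃ s, ∀ p, ExtP (f (j + 1)).1 (f (j + 1)).2 p → E p i s = n + 1 := by
    intro j
    obtain ⟨_, h1, h2, h3, h4⟩ := (hfR j) (hInvAll j)
    exact ⟨h1, h2, h3, h4⟩
  have hmonolen : ∀ j j', j ≤ j' → (f j).1 ≤ (f j').1 := by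
    intro j j' hjj
    induction j' with
    | zero =>
      have hj : j = 0 := Nat.le_zero.1 hjj
      subst hj; exact le_refl _
    | succ j' ih =>
      by_cases h : j ≤ j'
      · exact le_trans (ih h) (le_of_lt (hstep j').1)
      · have hj : j = j' + 1 := by omega
        subst hj; exact le_refl _
  have hagreecum : ∀ j j', j ≤ j' → ∀ x < (f j).1, (f j').2 x = (f j).2 x := by
    intro j j' hjj
    induction j' with
    | zero =>
      have hj : j = 0 := Nat.le_zero.1 hjj
      subst hj; intro x _; rfl
    | succ j' ih =>
      intro x hx
      by_cases h : j ≤ j'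
      · rw [(hstep j').2.1 x (lt_of_lt_of_le hx (hmonolen j j' h)), ih h x hx]
      · have hj : j = j' + 1 := by omega
        subst hj; rfl
  set G : ℕ → Bool := fun x => (f (x + 1)).2 x with hGdef
  have hlenlb : ∀ j, (f 0).1 + j ≤ (f j).1 := by
    intro j
    induction j with
    | zero => simp
    | succ j ih => have := (hstep j).1; omega
  have hxlt : ∀ x, x < (f (x + 1)).1 := by
    intro x; have := hlenlb (x + 1); omega
  have hGext : ∀ j, ∀ x < (f j).1, G x = (f j).2 x := by
    intro j x hx
    rcases le_total (x + 1) j with h | h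
    · exact (hagreecum (x + 1) j h x (hxlt x)).symm
    · exact hagreecum j (x + 1) h x hx
  have hGL : ∀ x < L, G x = q x := by
    have h := hGext 0
    rw [hf0] at h
    exact h
  have hGl₀ : ExtP l₀ g₀ G := fun x hx => by
    rw [hGL x (lt_of_lt_of_le hx (le_max_right m₁ l₀))]; exact hEq x hx
  have hGk : (Φ G).1 = k := hm₀ G (fun x hx => by
    rw [hGl₀ x (lt_of_lt_of_le hx hl₀m₀), hg₀false x hx])
  have hGinf : ({n | G n = true} : Set ℕ).Infinite := by
    have hinj : Function.Injective (fun j => (f (j + 1)).1 - 1) := by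
      have hsm : StrictMono (fun j => (f (j + 1)).1 - 1) := by
        apply strictMono_nat_of_lt_succ
        intro j
        have h1 := (hstep (j + 1)).1
        have h2 := (hstep j).1
        omega
      exact hsm.injective
    apply Set.infinite_of_injective_forall_mem hinj
    intro j
    simp only [Set.mem_setOf_eq]
    have hlt : (f (j + 1)).1 - 1 < (f (j + 1)).1 := by have := (hstep j).1; omega
    rw [hGext (j + 1) _ hlt]
    exact (hstep j).2.2.1
  have hGempty : ∀ i, i < k → i ∉ S → ∀ n, ∃ s, E G i s = n + 1 := by
    intro i hik hiS n
    obtain ⟨s, hs⟩ := (hstep (Nat.pair i n)).2.2.2 i n rfl hik hiS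
    exact ⟨s, hs G (fun x hx => hGext _ x hx)⟩
  have hvalidG : ∀ i < (Φ G).1,
      ({n | ¬ ∃ s : ℕ, (Φ G).2 i s = n + 1} : Set ℕ).Nonempty →
        a i ∈ {n | ¬ ∃ s : ℕ, (Φ G).2 i s = n + 1} := by
    intro i hi hne
    rw [hGk] at hi
    by_cases hiS : i ∈ S
    · have hs := hSafeS i hiS G hGl₀
      simp only [hadef, if_pos hiS]
      exact hs
    · exfalso
      obtain ⟨n, hn⟩ := hne
      exact hn (hGempty i hi hiS n)
  have hΨG : Ψ (G, a) = Ψ (q, a) :=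
    hm₁ G a (fun x hx => hGL x (lt_of_lt_of_le hx (le_max_left _ _))) (fun x _ => rfl)
  have hfinal := (hcorr G a hvalidG).2 hGinf
  rw [hΨG, hΨq] at hfinal
  exact Bool.false_ne_true hfinal
end

section
/- LPO is not strongly Weihrauch reducible to ECT. More generally, if P : X ⇉ ℕ is a multifunction all of whose solution sets are upward closed in ℕ, and g : Y ⇉ Fin m is a multifunction admitting two inputs with disjoint solution sets, then g is not strongly Weihrauch reducible to P. -/
/-- Pigeonhole: for any coloring of ℕ with finitely many colors, beyond some
threshold every color recurs. -/
lemma ect_total {k : ℕ} (f : ℕ → Fin k) : ∃ b : ℕ, ∀ x ≥ b, ∃ y > x, f x = f y := by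
  set S : Set ℕ := {x | ∀ y > x, f x ≠ f y} with hS
  have hinj : Set.InjOn f S := by
    intro a ha b hb hab
    by_contra hne
    rcases Nat.lt_or_ge a b with h | h
    · exact ha b h hab
    · exact hb a (lt_of_le_of_ne h (Ne.symm hne)) hab.symm
  have hfin : S.Finite := Set.Finite.of_finite_image (Set.toFinite _) hinj
  rcases hfin.bddAbove with ⟨b, hb⟩
  refine ⟨b + 1, fun x hx => ?_⟩
  have hxS : x ∉ S := fun hxin => absurd (hb hxin) (by omega)
  simp only [hS, Set.mem_setOf_eq, not_forall] at hxS
  rcases hxS with ⟨y, hy, hfy⟩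
  exact ⟨y, hy, not_not.mp hfy⟩

/-- The general strong-Weihrauch non-reduction argument. -/
lemma gen_sred {X Y : Type*} (P : X → Set ℕ) (m : ℕ) (g : Y → Set (Fin m))
    (htot : ∀ x, (P x).Nonempty)
    (hup : ∀ (x : X) (a b : ℕ), a ∈ P x → a ≤ b → b ∈ P x)
    (hdisj : ∃ y₁ y₂ : Y, (g y₁).Nonempty ∧ (g y₂).Nonempty ∧ Disjoint (g y₁) (g y₂)) :
    ¬ ∃ (Φ : Y → X) (Ψ : ℕ → Fin m), ∀ (y : Y) (s : ℕ), s ∈ P (Φ y) → Ψ s ∈ g y := by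
  rintro ⟨Φ, Ψ, hred⟩
  rcases hdisj with ⟨y₁, y₂, -, -, hd⟩
  rcases htot (Φ y₁) with ⟨a₁, ha₁⟩
  rcases htot (Φ y₂) with ⟨a₂, ha₂⟩
  have h1 : max a₁ a₂ ∈ P (Φ y₁) := hup _ _ _ ha₁ (le_max_left _ _)
  have h2 : max a₁ a₂ ∈ P (Φ y₂) := hup _ _ _ ha₂ (le_max_right _ _)
  exact Set.disjoint_left.mp hd (hred y₁ _ h1) (hred y₂ _ h2)

/-- LPO is not strongly Weihrauch reducible to ECT; more generally, no
multifunction `P : X ⇉ ℕ` that is total and has upward closed solution sets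
strongly Weihrauch-computes a multifunction `g : Y ⇉ Fin m` admitting two
inputs with (nonempty) disjoint solution sets. -/
theorem lpo_not_sred_ect :
    (¬ ∃ (Φ : (ℕ → ℕ) → Σ k : ℕ, ℕ → Fin k) (Ψ : ℕ → Fin 2),
      ∀ (p : ℕ → ℕ) (b : ℕ),
        (∀ x ≥ b, ∃ y > x, (Φ p).2 x = (Φ p).2 y) →
          (((∃ n, p n = 0) → Ψ b = 0) ∧ (¬ (∃ n, p n = 0) → Ψ b = 1))) ∧
    ∀ {X Y : Type*} (P : X → Set ℕ) (m : ℕ) (g : Y → Set (Fin m)),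
      (∀ x, (P x).Nonempty) →
      (∀ (x : X) (a b : ℕ), a ∈ P x → a ≤ b → b ∈ P x) →
      (∃ y₁ y₂ : Y, (g y₁).Nonempty ∧ (g y₂).Nonempty ∧ Disjoint (g y₁) (g y₂)) →
      ¬ ∃ (Φ : Y → X) (Ψ : ℕ → Fin m), ∀ (y : Y) (s : ℕ), s ∈ P (Φ y) → Ψ s ∈ g y := by
  refine ⟨?_, fun {X Y} P m g h1 h2 h3 => gen_sred P m g h1 h2 h3⟩
  rintro ⟨Φ, Ψ, hred⟩
  classical
  refine gen_sred (X := ℕ → ℕ) (Y := ℕ → ℕ)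
    (fun p => {b | ∀ x ≥ b, ∃ y > x, (Φ p).2 x = (Φ p).2 y}) 2
    (fun p => if ∃ n, p n = 0 then {0} else {1})
    (fun p => ect_total (Φ p).2)
    (fun p a b ha hab x hx => ha x (le_trans hab hx))
    ⟨(fun _ => 0), (fun _ => 1), ?_, ?_, ?_⟩
    ⟨id, Ψ, ?_⟩
  · simp
  · have h1 : ¬ ∃ n : ℕ, (1 : ℕ) = 0 := by simp
    simp [h1]
  · have h0 : ∃ n : ℕ, (0 : ℕ) = 0 := ⟨0, rfl⟩
    have h1 : ¬ ∃ n : ℕ, (1 : ℕ) = 0 := by simp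
    simp [h0, h1, Set.disjoint_left]
  · intro p s hs
    rcases hred p s hs with ⟨h0, h1⟩
    by_cases h : ∃ n, p n = 0
    · simp [h, h0 h]
    · simp [h, h1 h]
end

section
/- minECT × minECT is Weihrauch reducible to minECT: given two colorings p : ℕ → Fin k, q : ℕ → Fin l, each having at least one color occurring only finitely often, the coloring r(⟨n,m⟩) = ⟨p(n), q(m)⟩ (via a bijective monotone pairing) has the property that the last occurrence of ⟨c₀,c₁⟩ in r is at ⟨n₀,n₁⟩ iff n₀ is the last occurrence of c₀ in p and n₁ is the last occurrence of c₁ in q; hence the minimal ECT bounds for p and q are computable from the minimal ECT bound for r. -/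
/-- From a coloring with a color occurring finitely (and at least once), extract the
greatest position that is a "last occurrence" of its color. -/
lemma minect_aux {k : ℕ} (p : ℕ → Fin k)
    (hp : ∃ c : Fin k, (∃ n, p n = c) ∧ Set.Finite {n | p n = c}) :
    ∃ n₀ : ℕ, (∀ y > n₀, p n₀ ≠ p y) ∧ (∀ x > n₀, ∃ y > x, p x = p y) := by
  classical
  set S : Set ℕ := {x | ∀ y > x, p x ≠ p y} with hS
  -- S nonempty
  obtain ⟨c, ⟨n, hn⟩, hfin⟩ := hp
  have hne : {m | p m = c}.Nonempty := ⟨n, hn⟩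
  obtain ⟨a, ha, hamax⟩ := Set.Finite.exists_maximalFor id _ hfin hne
  have haS : a ∈ S := by
    intro y hy hpy
    have : y ≤ a := hamax (show p y = c by rw [← hpy]; exact ha) (le_of_lt hy)
    omega
  -- S finite via injectivity of p on S
  have hinj : Set.InjOn p S := by
    intro x hx x' hx' hpx
    rcases lt_trichotomy x x' with h | h | h
    · exact absurd hpx (hx x' h)
    · exact h
    · exact absurd hpx.symm (hx' x h)
  have hSfin : S.Finite := Set.Finite.of_finite_image (Set.toFinite _) hinj
  obtain ⟨n₀, hn₀S, hmax⟩ := Set.Finite.exists_maximalFor id _ hSfin ⟨a, haS⟩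
  refine ⟨n₀, hn₀S, ?_⟩
  intro x hx
  by_contra h
  push_neg at h
  have hxS : x ∈ S := by
    intro y hy hpy
    exact absurd hpy (h y hy)
  have : x ≤ n₀ := hmax hxS (le_of_lt hx)
  omega

/-- minECT × minECT ≤_W minECT: given colorings `p`, `q`, each with a color
occurring only finitely often, the product coloring
`r (pair n m) = pairC (p n) (q m)` (via bijective monotone pairings) has the
property that last occurrences in `r` correspond exactly to pairs of last
occurrences in `p` and `q`; hence the minimal ECT bounds for `p` and `q` are
computable from the minimal ECT bound for `r`. -/
theorem min_ect_idempotent (k l : ℕ) (p : ℕ → Fin k) (q : ℕ → Fin l)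
    (hp : ∃ c : Fin k, (∃ n, p n = c) ∧ Set.Finite {n | p n = c})
    (hq : ∃ c : Fin l, (∃ n, q n = c) ∧ Set.Finite {n | q n = c})
    (pair : ℕ → ℕ → ℕ)
    (hpair : Function.Bijective fun x : ℕ × ℕ => pair x.1 x.2)
    (hmono : ∀ a a' b b' : ℕ, a ≤ a' → b ≤ b' → pair a b ≤ pair a' b')
    (pairC : Fin k → Fin l → Fin (k * l))
    (hpairC : Function.Bijective fun x : Fin k × Fin l => pairC x.1 x.2)
    (r : ℕ → Fin (k * l)) (hr : ∀ n m : ℕ, r (pair n m) = pairC (p n) (q m)) :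
    (∀ (c₀ : Fin k) (c₁ : Fin l) (n₀ n₁ : ℕ),
      (r (pair n₀ n₁) = pairC c₀ c₁ ∧ ∀ m > pair n₀ n₁, r m ≠ pairC c₀ c₁) ↔
        ((p n₀ = c₀ ∧ ∀ m > n₀, p m ≠ c₀) ∧ (q n₁ = c₁ ∧ ∀ m > n₁, q m ≠ c₁))) ∧
    (∀ br : ℕ,
      ((∀ x ≥ br, ∃ y > x, r x = r y) ∧
        ∀ b' < br, ¬ ∀ x ≥ b', ∃ y > x, r x = r y) →
      ∃ n₀ n₁ : ℕ, br = pair n₀ n₁ + 1 ∧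
        ((∀ x ≥ n₀ + 1, ∃ y > x, p x = p y) ∧
          ∀ b' < n₀ + 1, ¬ ∀ x ≥ b', ∃ y > x, p x = p y) ∧
        ((∀ x ≥ n₁ + 1, ∃ y > x, q x = q y) ∧
          ∀ b' < n₁ + 1, ¬ ∀ x ≥ b', ∃ y > x, q x = q y)) := by
  have hCinj : ∀ (a : Fin k) (b : Fin l) (c : Fin k) (d : Fin l),
      pairC a b = pairC c d → a = c ∧ b = d := by
    intro a b c d h
    have h2 : ((a, b) : Fin k × Fin l) = (c, d) := hpairC.injective h
    exact ⟨congrArg Prod.fst h2, congrArg Prod.snd h2⟩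
  have hPinj : ∀ a b c d : ℕ, pair a b = pair c d → a = c ∧ b = d := by
    intro a b c d h
    have h2 : ((a, b) : ℕ × ℕ) = (c, d) := hpair.injective h
    exact ⟨congrArg Prod.fst h2, congrArg Prod.snd h2⟩
  have hstrict1 : ∀ a a' b : ℕ, a < a' → pair a b < pair a' b := by
    intro a a' b h
    refine lt_of_le_of_ne (hmono a a' b b (le_of_lt h) le_rfl) ?_
    intro he
    have := (hPinj a b a' b he).1
    omega
  have hstrict2 : ∀ a b b' : ℕ, b < b' → pair a b < pair a b' := by
    intro a b b' h
    refine lt_of_le_of_ne (hmono a a b b' le_rfl (le_of_lt h)) ?_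
    intro he
    have := (hPinj a b a b' he).2
    omega
  have part1 : ∀ (c₀ : Fin k) (c₁ : Fin l) (n₀ n₁ : ℕ),
      (r (pair n₀ n₁) = pairC c₀ c₁ ∧ ∀ m > pair n₀ n₁, r m ≠ pairC c₀ c₁) ↔
        ((p n₀ = c₀ ∧ ∀ m > n₀, p m ≠ c₀) ∧ (q n₁ = c₁ ∧ ∀ m > n₁, q m ≠ c₁)) := by
    intro c₀ c₁ n₀ n₁
    constructor
    · rintro ⟨h1, h2⟩
      rw [hr] at h1
      obtain ⟨e1, e2⟩ := hCinj _ _ _ _ h1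
      refine ⟨⟨e1, ?_⟩, ⟨e2, ?_⟩⟩
      · intro m hm hpm
        exact h2 (pair m n₁) (hstrict1 n₀ m n₁ hm) (by rw [hr, hpm, e2])
      · intro m hm hqm
        exact h2 (pair n₀ m) (hstrict2 n₀ n₁ m hm) (by rw [hr, hqm, e1])
    · rintro ⟨⟨e1, h1⟩, ⟨e2, h2⟩⟩
      refine ⟨by rw [hr, e1, e2], ?_⟩
      intro m hm hrm
      obtain ⟨x, hx⟩ := hpair.surjective m
      obtain ⟨a, b⟩ := x
      simp only at hx
      subst hx
      rw [hr] at hrm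
      obtain ⟨f1, f2⟩ := hCinj _ _ _ _ hrm
      have ha : a ≤ n₀ := by
        by_contra h
        exact h1 a (lt_of_not_ge h) f1
      have hb : b ≤ n₁ := by
        by_contra h
        exact h2 b (lt_of_not_ge h) f2
      exact absurd (hmono a n₀ b n₁ ha hb) (not_le.mpr hm)
  refine ⟨part1, ?_⟩
  obtain ⟨n₀, hlast₀, hrec₀⟩ := minect_aux p hp
  obtain ⟨n₁, hlast₁, hrec₁⟩ := minect_aux q hq
  intro br ⟨hbr1, hbr2⟩
  -- every position ≥ pair n₀ n₁ + 1 recurs in r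
  have A : ∀ x ≥ pair n₀ n₁ + 1, ∃ y > x, r x = r y := by
    intro x hx
    obtain ⟨z, hz⟩ := hpair.surjective x
    obtain ⟨a, b⟩ := z
    simp only at hz
    subst hz
    have hcase : ¬(a ≤ n₀ ∧ b ≤ n₁) := by
      rintro ⟨h1, h2⟩
      have := hmono a n₀ b n₁ h1 h2
      omega
    rcases not_and_or.mp hcase with h | h
    · obtain ⟨a', ha', hpa⟩ := hrec₀ a (lt_of_not_ge h)
      exact ⟨pair a' b, hstrict1 a a' b ha', by rw [hr, hr, hpa]⟩
    · obtain ⟨b', hb', hqb⟩ := hrec₁ b (lt_of_not_ge h)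
      exact ⟨pair a b', hstrict2 a b b' hb', by rw [hr, hr, hqb]⟩
  -- position pair n₀ n₁ does not recur in r
  have B : ∀ y > pair n₀ n₁, r (pair n₀ n₁) ≠ r y := by
    intro y hy hry
    obtain ⟨z, hz⟩ := hpair.surjective y
    obtain ⟨a, b⟩ := z
    simp only at hz
    subst hz
    rw [hr, hr] at hry
    obtain ⟨f1, f2⟩ := hCinj _ _ _ _ hry
    have ha : a ≤ n₀ := by
      by_contra h
      exact hlast₀ a (lt_of_not_ge h) f1
    have hb : b ≤ n₁ := by
      by_contra h
      exact hlast₁ b (lt_of_not_ge h) f2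
    have := hmono a n₀ b n₁ ha hb
    omega
  have hle : br ≤ pair n₀ n₁ + 1 := by
    by_contra h
    exact hbr2 (pair n₀ n₁ + 1) (lt_of_not_ge h) A
  have hge : pair n₀ n₁ + 1 ≤ br := by
    by_contra h
    obtain ⟨y, hy, hry⟩ := hbr1 (pair n₀ n₁) (by omega)
    exact B y hy hry
  refine ⟨n₀, n₁, by omega, ⟨?_, ?_⟩, ⟨?_, ?_⟩⟩
  · intro x hx
    exact hrec₀ x (by omega)
  · intro b' hb' H
    obtain ⟨y, hy, hpy⟩ := H n₀ (by omega)
    exact hlast₀ y hy hpy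
  · intro x hx
    exact hrec₁ x (by omega)
  · intro b' hb' H
    obtain ⟨y, hy, hqy⟩ := H n₁ (by omega)
    exact hlast₁ y hy hqy
end
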